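/- arXiv:2604.25246 — 2 statements merged into one kernel-verified Lean document; each statement's English description precedes it below -/
import Mathlib

section
/- Fix integers m ≥ 2, r with 1 ≤ r ≤ m−1, and s ≥ 0 with r + s ≤ m−1. Then for every u ≥ 0, the coefficient of x^u in the power series p_r(x)·p_{m−r−s−1}(x)·p_m(x)^{−1} ∈ ℚ[[x]] equals D_m(r, m−r−s−1; u), the number of Dyck paths of height at most m−1 and semilength r+s+u whose first r steps are up-steps and whose last r+s steps are down-steps. -/
/-- The Chebyshev-type polynomial sequence: `p 0 = p 1 = 1`,
`p (r+2) = p (r+1) - X * p r`. -/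
noncomputable def chebP : ℕ → Polynomial ℚ
  | 0 => 1
  | 1 => 1
  | (r+2) => chebP (r+1) - Polynomial.X * chebP r

/-- The height of a lattice path after its first `i` steps, where the path is
encoded as `st : Fin n → Bool` (`true` = up-step `U = (1,1)`,
`false` = down-step `D = (1,-1)`), starting at `(0,0)`. -/
def heightAt {n : ℕ} (st : Fin n → Bool) (i : ℕ) : ℤ :=
  ∑ j ∈ Finset.univ.filter (fun j : Fin n => (j : ℕ) < i),
    (if st j then (1 : ℤ) else -1)

/-- `dyckCount m a b u` is the number of Dyck paths (lattice paths from `(0,0)`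
ending on the x-axis with steps `U = (1,1)`, `D = (1,-1)` that never go below
the x-axis) of height at most `m-1` and semilength `m-1-b+u` whose first `a`
steps are up-steps and whose last `m-1-b` steps are down-steps. -/
noncomputable def dyckCount (m a b u : ℕ) : ℕ :=
  Nat.card {st : Fin (2 * (m - 1 - b + u)) → Bool //
    heightAt st (2 * (m - 1 - b + u)) = 0 ∧
    (∀ i ≤ 2 * (m - 1 - b + u), 0 ≤ heightAt st i ∧ heightAt st i ≤ (m : ℤ) - 1) ∧
    (∀ j : Fin (2 * (m - 1 - b + u)), (j : ℕ) < a → st j = true) ∧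
    (∀ j : Fin (2 * (m - 1 - b + u)),
        2 * (m - 1 - b + u) - (m - 1 - b) ≤ (j : ℕ) → st j = false)}

lemma heightAt_zero {n : ℕ} (st : Fin n → Bool) : heightAt st 0 = 0 := by
  simp [heightAt]

lemma heightAt_succ {n : ℕ} (st : Fin n → Bool) {i : ℕ} (h : i < n) :
    heightAt st (i+1) = heightAt st i + (if st ⟨i, h⟩ then (1:ℤ) else -1) := by
  unfold heightAt
  have : Finset.univ.filter (fun j : Fin n => (j : ℕ) < i + 1)
      = insert ⟨i, h⟩ (Finset.univ.filter (fun j : Fin n => (j : ℕ) < i)) := by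
    ext j
    simp only [Finset.mem_filter, Finset.mem_univ, true_and, Finset.mem_insert]
    constructor
    · intro hj
      rcases Nat.lt_succ_iff_lt_or_eq.mp hj with h' | h'
      · exact Or.inr h'
      · exact Or.inl (Fin.ext h')
    · rintro (rfl | h') 
      · exact Nat.lt_succ_self i
      · exact Nat.lt_succ_of_lt h'
  rw [this, Finset.sum_insert (by simp), add_comm]

lemma heightAt_stable {n : ℕ} (st : Fin n → Bool) {i : ℕ} (h : n ≤ i) :
    heightAt st i = heightAt st n := by
  unfold heightAt
  congr 1
  ext j
  simp only [Finset.mem_filter, Finset.mem_univ, true_and]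
  exact ⟨fun _ => j.isLt, fun _ => lt_of_lt_of_le j.isLt h⟩

lemma heightAt_abs {n : ℕ} (st : Fin n → Bool) (i : ℕ) :
    |heightAt st i| ≤ (i : ℤ) := by
  induction i with
  | zero => simp [heightAt_zero]
  | succ i ih =>
    by_cases h : i < n
    · rw [heightAt_succ st h]
      have : |(if st ⟨i, h⟩ then (1:ℤ) else -1)| ≤ 1 := by split <;> simp
      calc |heightAt st i + _| ≤ |heightAt st i| + _ := abs_add_le _ _
        _ ≤ (i:ℤ) + 1 := add_le_add ih this
        _ = ((i+1 : ℕ) : ℤ) := by push_cast; ring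
    · have hn : n ≤ i := Nat.le_of_not_lt h
      rw [heightAt_stable st (le_trans hn (Nat.le_succ i)), ← heightAt_stable st hn]
      exact le_trans ih (by exact_mod_cast Nat.le_succ i)

lemma heightAt_cons_zero {n : ℕ} (b : Bool) (st : Fin n → Bool) :
    heightAt (Fin.cons b st) 0 = 0 := heightAt_zero _

lemma heightAt_cons {n : ℕ} (b : Bool) (st : Fin n → Bool) (k : ℕ) :
    heightAt (Fin.cons b st) (k+1) = (if b then (1:ℤ) else -1) + heightAt st k := by
  induction k with
  | zero =>
    rw [heightAt_succ (Fin.cons b st) (Nat.succ_pos n), heightAt_zero, heightAt_zero]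
    simp [Fin.cons]
    exact if_congr Iff.rfl rfl rfl
  | succ k ih =>
    by_cases h : k < n
    · have h' : k + 1 < n + 1 := Nat.succ_lt_succ h
      have hc : (Fin.cons b st : Fin (n+1) → Bool) ⟨k+1, h'⟩ = st ⟨k, h⟩ := by
        rw [show (⟨k+1, h'⟩ : Fin (n+1)) = Fin.succ ⟨k, h⟩ from rfl, Fin.cons_succ]
      rw [heightAt_succ (Fin.cons b st) h', ih, heightAt_succ st h, hc, add_assoc]
    · have hn : n ≤ k := Nat.le_of_not_lt h
      rw [heightAt_stable (Fin.cons b st) (by omega : n + 1 ≤ k + 1 + 1),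
          heightAt_stable st (by omega : n ≤ k + 1), ← heightAt_stable st hn, ← ih,
          heightAt_stable (Fin.cons b st) (by omega : n + 1 ≤ k + 1)]

/-- Walks of `n` steps starting at height `i`, ending at height `jt`, staying in `[0, m-1]`. -/
def WalkPred (m : ℕ) (jt i : ℤ) {n : ℕ} (st : Fin n → Bool) : Prop :=
  (∀ k ≤ n, 0 ≤ i + heightAt st k ∧ i + heightAt st k ≤ (m:ℤ) - 1) ∧
    i + heightAt st n = jt

noncomputable def wc (m : ℕ) (jt : ℤ) (n : ℕ) (i : ℤ) : ℕ :=
  Nat.card {st : Fin n → Bool // WalkPred m jt i st}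

lemma wc_out {m : ℕ} {jt i : ℤ} {n : ℕ} (h : ¬ (0 ≤ i ∧ i ≤ (m:ℤ) - 1)) :
    wc m jt n i = 0 := by
  rw [wc, Nat.card_eq_zero]
  left
  refine ⟨?_⟩
  rintro ⟨st, hst, -⟩
  have := hst 0 (Nat.zero_le n)
  rw [heightAt_zero, add_zero] at this
  exact h this

lemma wc_dist {m : ℕ} {jt i : ℤ} {n : ℕ} (h : (n : ℤ) < |jt - i|) :
    wc m jt n i = 0 := by
  rw [wc, Nat.card_eq_zero]
  left
  refine ⟨?_⟩
  rintro ⟨st, -, hend⟩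
  have := heightAt_abs st n
  rw [show heightAt st n = jt - i by omega] at this
  omega

lemma wc_zero {m : ℕ} {jt : ℤ} (h0 : 0 ≤ jt) (h1 : jt ≤ (m:ℤ) - 1) :
    wc m jt 0 jt = 1 := by
  rw [wc, Nat.card_eq_one_iff_unique]
  constructor
  · exact ⟨fun a b => Subtype.ext (funext fun j => absurd j.isLt (by omega))⟩
  · refine ⟨⟨fun j => absurd j.isLt (by omega), ?_, ?_⟩⟩
    · intro k hk
      interval_cases k
      rw [heightAt_zero]
      constructor <;> omega
    · rw [heightAt_zero]; omega

lemma walkPred_cons {m : ℕ} {jt i : ℤ} {n : ℕ} (b : Bool) (st : Fin n → Bool)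
    (h0 : 0 ≤ i) (h1 : i ≤ (m:ℤ) - 1) :
    WalkPred m jt i (Fin.cons b st : Fin (n+1) → Bool) ↔
      WalkPred m jt (i + (if b then (1:ℤ) else -1)) st := by
  unfold WalkPred
  constructor
  · rintro ⟨hrange, hend⟩
    refine ⟨fun k hk => ?_, ?_⟩
    · have := hrange (k+1) (by omega)
      rwa [heightAt_cons, ← add_assoc] at this
    · rw [heightAt_cons, ← add_assoc] at hend
      exact hend
  · rintro ⟨hrange, hend⟩
    refine ⟨fun k hk => ?_, ?_⟩
    · match k with
      | 0 => rw [heightAt_zero, add_zero]; exact ⟨h0, h1⟩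
      | (k+1) =>
        have := hrange k (by omega)
        rwa [heightAt_cons, ← add_assoc]
    · rwa [heightAt_cons, ← add_assoc]

lemma wc_succ {m : ℕ} {jt i : ℤ} {n : ℕ} (h0 : 0 ≤ i) (h1 : i ≤ (m:ℤ) - 1) :
    wc m jt (n+1) i = wc m jt n (i+1) + wc m jt n (i-1) := by
  have e1 : {st : Fin (n+1) → Bool // WalkPred m jt i st} ≃
      {p : Bool × (Fin n → Bool) // WalkPred m jt i (Fin.cons p.1 p.2 : Fin (n+1) → Bool)} := by
    refine (Equiv.subtypeEquiv ?_ ?_).symm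
    · exact (Fin.consEquiv (fun _ => Bool))
    · intro p
      rfl
  have e2 : {p : Bool × (Fin n → Bool) // WalkPred m jt i (Fin.cons p.1 p.2 : Fin (n+1) → Bool)}
      ≃ Σ b : Bool, {st : Fin n → Bool // WalkPred m jt i (Fin.cons b st : Fin (n+1) → Bool)} :=
    Equiv.subtypeProdEquivSigmaSubtype
      (fun (b : Bool) (st : Fin n → Bool) => WalkPred m jt i (Fin.cons b st : Fin (n+1) → Bool))
  have e3 : (Σ b : Bool, {st : Fin n → Bool // WalkPred m jt i (Fin.cons b st : Fin (n+1) → Bool)})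
      ≃ {st : Fin n → Bool // WalkPred m jt i (Fin.cons true st : Fin (n+1) → Bool)}
        ⊕ {st : Fin n → Bool // WalkPred m jt i (Fin.cons false st : Fin (n+1) → Bool)} :=
    { toFun := fun x => match x with
        | ⟨true, y⟩ => Sum.inl y
        | ⟨false, y⟩ => Sum.inr y
      invFun := fun x => match x with
        | Sum.inl y => ⟨true, y⟩
        | Sum.inr y => ⟨false, y⟩
      left_inv := by rintro ⟨(b|b), y⟩ <;> rfl
      right_inv := by rintro (y|y) <;> rfl }
  have : wc m jt (n+1) i =
      Nat.card {st : Fin n → Bool // WalkPred m jt i (Fin.cons true st : Fin (n+1) → Bool)}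
      + Nat.card {st : Fin n → Bool // WalkPred m jt i (Fin.cons false st : Fin (n+1) → Bool)} := by
    rw [wc, Nat.card_congr ((e1.trans e2).trans e3), Nat.card_sum]
  rw [this]
  congr 1
  · rw [wc]
    exact Nat.card_congr (Equiv.subtypeEquivRight (fun st => by
      rw [walkPred_cons true st h0 h1]; simp))
  · rw [wc]
    exact Nat.card_congr (Equiv.subtypeEquivRight (fun st => by
      rw [walkPred_cons false st h0 h1]; simp [sub_eq_add_neg]))

noncomputable def chebQ (k : ℕ) : PowerSeries ℚ := (chebP k : PowerSeries ℚ)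

lemma chebQ_zero : chebQ 0 = 1 := by
  rw [chebQ, show chebP 0 = 1 from rfl, Polynomial.coe_one]

lemma chebQ_one : chebQ 1 = 1 := by
  rw [chebQ, show chebP 1 = 1 from rfl, Polynomial.coe_one]

lemma chebQ_add_two (k : ℕ) :
    chebQ (k+2) = chebQ (k+1) - PowerSeries.X * chebQ k := by
  rw [chebQ, show chebP (k+2) = chebP (k+1) - Polynomial.X * chebP k from rfl,
    Polynomial.coe_sub, Polynomial.coe_mul, Polynomial.coe_X, chebQ, chebQ]

lemma chebQ_mul (j k : ℕ) :
    chebQ (j+1) * chebQ (k+1) - PowerSeries.X * chebQ j * chebQ k = chebQ (j+k+2) := by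
  induction j generalizing k with
  | zero =>
    rw [chebQ_one, chebQ_zero, one_mul, mul_one, show 0+k+2 = k+2 from by ring, chebQ_add_two]
  | succ j ih =>
    have e : chebQ (j+2) = chebQ (j+1) - PowerSeries.X * chebQ j := chebQ_add_two j
    calc chebQ (j+1+1) * chebQ (k+1) - PowerSeries.X * chebQ (j+1) * chebQ k
        = (chebQ (j+1) * chebQ (k+1+1) - PowerSeries.X * chebQ j * chebQ (k+1)) := by
          rw [e, chebQ_add_two k]; ring
      _ = chebQ (j + (k+1) + 2) := ih (k+1)
      _ = chebQ (j+1+k+2) := by ring_nf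

lemma chebQ_constCoeff (k : ℕ) : PowerSeries.constantCoeff (chebQ k) = 1 := by
  induction k using Nat.strong_induction_on with
  | _ k ih =>
    match k with
    | 0 => rw [chebQ_zero]; simp
    | 1 => rw [chebQ_one]; simp
    | (k+2) =>
      rw [chebQ_add_two, map_sub, map_mul, ih (k+1) (by omega)]
      simp [PowerSeries.constantCoeff_X]

lemma chebQ_ne_zero_const (k : ℕ) : PowerSeries.constantCoeff (chebQ k) ≠ 0 := by
  rw [chebQ_constCoeff]; exact one_ne_zero

noncomputable def Fl (m j i : ℕ) : PowerSeries ℚ :=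
  PowerSeries.mk fun u => ((wc m (j : ℤ) (j - i + 2*u) (i : ℤ) : ℕ) : ℚ)

noncomputable def Fh (m j i : ℕ) : PowerSeries ℚ :=
  PowerSeries.mk fun u => ((wc m (j : ℤ) (i - j + 2*u) (i : ℤ) : ℕ) : ℚ)

lemma wc_cast_congr {m : ℕ} {jt jt' i i' : ℤ} {n n' : ℕ} (hj : jt = jt') (hn : n = n')
    (hi : i = i') : ((wc m jt n i : ℕ) : ℚ) = ((wc m jt' n' i' : ℕ) : ℚ) := by
  subst hj; subst hn; subst hi; rfl

lemma relR1 (m j : ℕ) (hm : 2 ≤ m) (hj : 1 ≤ j) : Fl m j 0 = Fl m j 1 := by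
  apply PowerSeries.ext; intro u
  rw [Fl, Fl, PowerSeries.coeff_mk, PowerSeries.coeff_mk]
  push_cast
  have h1 : j - 0 + 2*u = (j - 1 + 2*u) + 1 := by omega
  rw [h1, wc_succ (le_refl (0:ℤ)) (by push_cast; omega), wc_out (i := (0:ℤ) - 1) (by omega)]
  rw [add_zero]
  exact wc_cast_congr rfl rfl (by norm_num)

lemma relR2 (m j i : ℕ) (hm : 2 ≤ m) (hij : i + 1 < j) (hjm : j ≤ m - 1) :
    Fl m j (i+1) = Fl m j (i+2) + PowerSeries.X * Fl m j i := by
  apply PowerSeries.ext; intro u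
  rw [Fl, Fl, Fl, map_add, PowerSeries.coeff_mk, PowerSeries.coeff_mk]
  push_cast
  have h1 : j - (i+1) + 2*u = (j - (i+2) + 2*u) + 1 := by omega
  have hlt : ((i:ℤ)+1) ≤ (m:ℤ) - 1 := by
    have : j ≤ m - 1 := hjm
    have : (j:ℤ) ≤ (m:ℤ) - 1 := by push_cast; omega
    push_cast; omega
  rw [h1, wc_succ (by positivity) hlt]
  cases u with
  | zero =>
    rw [PowerSeries.coeff_zero_X_mul, add_zero, wc_dist (i := ((i:ℕ):ℤ)+1-1)
      (by push_cast; rw [abs_of_nonneg (by push_cast; omega)]; push_cast; omega)]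
    rw [add_zero]
    exact wc_cast_congr rfl rfl (by ring)
  | succ v =>
    rw [PowerSeries.coeff_succ_X_mul, PowerSeries.coeff_mk]
    have e1 : ((i:ℤ)+1)+1 = (i:ℤ)+2 := by ring
    have e2 : ((i:ℤ)+1)-1 = (i:ℤ) := by ring
    have e3 : j - (i+2) + 2*(v+1) = j - i + 2*v := by omega
    rw [e1, e2, e3]
    exact Nat.cast_add _ _

lemma Fh_top (m j : ℕ) : Fh m j m = 0 := by
  apply PowerSeries.ext; intro u
  rw [Fh, PowerSeries.coeff_mk, wc_out (by push_cast; omega)]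
  simp

lemma Fl_eq_Fh (m j : ℕ) : Fl m j j = Fh m j j := rfl

lemma relR3 (m j i : ℕ) (hm : 2 ≤ m) (hij : j < i + 1) (him : i + 1 ≤ m - 1) :
    Fh m j (i+1) = PowerSeries.X * Fh m j (i+2) + Fh m j i := by
  apply PowerSeries.ext; intro u
  rw [Fh, Fh, Fh, map_add, PowerSeries.coeff_mk]
  push_cast
  have h1 : (i+1) - j + 2*u = (i - j + 2*u) + 1 := by omega
  have hlt : ((i:ℤ)+1) ≤ (m:ℤ) - 1 := by
    have : (i:ℤ) + 1 + 1 ≤ (m:ℤ) := by exact_mod_cast Nat.add_le_of_le_sub (by omega) him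
    omega
  rw [h1, wc_succ (by positivity) hlt]
  have e2 : ((i:ℤ)+1)-1 = (i:ℤ) := by ring
  rw [e2, PowerSeries.coeff_mk]
  cases u with
  | zero =>
    rw [PowerSeries.coeff_zero_X_mul, wc_dist (i := ((i:ℕ):ℤ)+1+1)
      (by rw [abs_of_nonpos (by push_cast; omega)]; push_cast; omega)]
    norm_num
  | succ v =>
    rw [PowerSeries.coeff_succ_X_mul, PowerSeries.coeff_mk]
    have e1 : ((i:ℤ)+1)+1 = (i:ℤ)+2 := by ring
    have e3 : i - j + 2*(v+1) = (i+2) - j + 2*v := by omega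
    rw [e1, e3]
    exact Nat.cast_add _ _

lemma relR4 (m t : ℕ) (hm : 2 ≤ m) (hjm : t+1 ≤ m-1) :
    Fl m (t+1) (t+1) =
      1 + PowerSeries.X * Fh m (t+1) (t+2) + PowerSeries.X * Fl m (t+1) t := by
  apply PowerSeries.ext; intro u
  rw [Fl, Fl, Fh, map_add, map_add, PowerSeries.coeff_mk, PowerSeries.coeff_one]
  push_cast
  have hlt : ((t:ℤ)+1) ≤ (m:ℤ) - 1 := by
    have : (t:ℤ) + 1 + 1 ≤ (m:ℤ) := by exact_mod_cast Nat.add_le_of_le_sub (by omega) hjm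
    omega
  cases u with
  | zero =>
    rw [PowerSeries.coeff_zero_X_mul, PowerSeries.coeff_zero_X_mul]
    have h0 : t - t + 2*0 = 0 := by omega
    rw [h0, wc_zero (by positivity) hlt]
    norm_num
  | succ v =>
    rw [PowerSeries.coeff_succ_X_mul, PowerSeries.coeff_succ_X_mul,
      PowerSeries.coeff_mk, PowerSeries.coeff_mk]
    have h1 : t - t + 2*(v+1) = (2*v+1) + 1 := by omega
    rw [h1, wc_succ (by positivity) hlt]
    have e1 : ((t:ℤ)+1)+1 = (t:ℤ)+2 := by ring
    have e2 : ((t:ℤ)+1)-1 = (t:ℤ) := by ring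
    have e4 : (t+1) - t + 2*v = 2*v+1 := by omega
    rw [e1, e2, e4]
    norm_num

lemma claimA (m j : ℕ) (hm : 2 ≤ m) (hjm : j ≤ m - 1) :
    ∀ i, i ≤ j → Fl m j i = chebQ i * Fl m j 0 := by
  intro i
  induction i using Nat.strong_induction_on with
  | _ i ih =>
    match i with
    | 0 => intro _; rw [chebQ_zero, one_mul]
    | 1 => intro h1; rw [chebQ_one, one_mul, relR1 m j hm (le_trans (by norm_num) h1)]
    | (k+2) =>
      intro hk
      have h2 : Fl m j (k+1) = Fl m j (k+2) + PowerSeries.X * Fl m j k :=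
        relR2 m j k hm (by omega) hjm
      have hA1 : Fl m j (k+1) = chebQ (k+1) * Fl m j 0 := ih (k+1) (by omega) (by omega)
      have hA0 : Fl m j k = chebQ k * Fl m j 0 := ih k (by omega) (by omega)
      have : Fl m j (k+2) = Fl m j (k+1) - PowerSeries.X * Fl m j k := by
        rw [h2]; ring
      rw [this, hA1, hA0, chebQ_add_two]; ring

lemma claimB (m j : ℕ) (hm : 2 ≤ m) :
    ∀ k, k ≤ m - 1 - j → Fh m j (m-1-k) = chebQ k * Fh m j (m-1) := by
  intro k
  induction k using Nat.strong_induction_on with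
  | _ k ih =>
    match k with
    | 0 => intro _; rw [chebQ_zero, one_mul, Nat.sub_zero]
    | 1 =>
      intro h1
      have h3 : Fh m j ((m-2)+1) = PowerSeries.X * Fh m j ((m-2)+2) + Fh m j (m-2) :=
        relR3 m j (m-2) hm (by omega) (by omega)
      rw [show (m-2)+1 = m-1 from by omega, show (m-2)+2 = m from by omega, Fh_top,
        mul_zero, zero_add] at h3
      rw [show m-1-1 = m-2 from by omega, ← h3, chebQ_one, one_mul]
    | (k+2) =>
      intro hk
      have h3 : Fh m j ((m-1-(k+2))+1) =
          PowerSeries.X * Fh m j ((m-1-(k+2))+2) + Fh m j (m-1-(k+2)) :=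
        relR3 m j (m-1-(k+2)) hm (by omega) (by omega)
      rw [show (m-1-(k+2))+1 = m-1-(k+1) from by omega,
        show (m-1-(k+2))+2 = m-1-k from by omega] at h3
      have hB1 : Fh m j (m-1-(k+1)) = chebQ (k+1) * Fh m j (m-1) := ih (k+1) (by omega) (by omega)
      have hB0 : Fh m j (m-1-k) = chebQ k * Fh m j (m-1) := ih k (by omega) (by omega)
      have : Fh m j (m-1-(k+2)) = Fh m j (m-1-(k+1)) - PowerSeries.X * Fh m j (m-1-k) := by
        rw [h3]; ring
      rw [this, hB1, hB0, chebQ_add_two]; ring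

lemma keyIdentity (m j : ℕ) (hm : 2 ≤ m) (hj : 1 ≤ j) (hjm : j ≤ m - 1) :
    chebQ m * Fl m j 0 = chebQ (m-1-j) := by
  have hj4 := relR4 m (j-1) hm (by omega)
  rw [show j-1+1 = j from by omega, show j-1+2 = j+1 from by omega] at hj4
  have hAj : Fl m j j = chebQ j * Fl m j 0 := claimA m j hm hjm j le_rfl
  have hAj1 : Fl m j (j-1) = chebQ (j-1) * Fl m j 0 := claimA m j hm hjm (j-1) (by omega)
  have hcheb : chebQ (j+1) = chebQ j - PowerSeries.X * chebQ (j-1) := by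
    have := chebQ_add_two (j-1)
    rwa [show j-1+2 = j+1 from by omega, show j-1+1 = j from by omega] at this
  by_cases hje : j = m - 1
  · -- top case : Fh m j (j+1) = Fh m j m = 0
    rw [show j+1 = m from by omega] at hj4
    rw [Fh_top, mul_zero, add_zero] at hj4
    rw [hAj, hAj1] at hj4
    have h1 : chebQ (j+1) * Fl m j 0 = 1 := by rw [hcheb]; linear_combination hj4
    rw [show m-1-j = 0 from by omega, chebQ_zero,
      show chebQ m = chebQ (j+1) from by rw [show m = j+1 from by omega], h1]
  · -- general case
    have hBj : Fh m j j = chebQ (m-1-j) * Fh m j (m-1) := by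
      have := claimB m j hm (m-1-j) le_rfl
      rwa [show m-1-(m-1-j) = j from by omega] at this
    have hBj1 : Fh m j (j+1) = chebQ (m-2-j) * Fh m j (m-1) := by
      have := claimB m j hm (m-2-j) (by omega)
      rwa [show m-1-(m-2-j) = j+1 from by omega] at this
    have eq1 : chebQ j * Fl m j 0 = chebQ (m-1-j) * Fh m j (m-1) := by
      rw [← hAj, Fl_eq_Fh, hBj]
    have eq2 : chebQ (j+1) * Fl m j 0 = 1 + PowerSeries.X * chebQ (m-2-j) * Fh m j (m-1) := by
      rw [hcheb]
      have : Fl m j j - PowerSeries.X * Fl m j (j-1) = 1 + PowerSeries.X * Fh m j (j+1) := by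
        rw [hj4]; ring
      rw [hAj, hAj1, hBj1] at this
      calc (chebQ j - PowerSeries.X * chebQ (j-1)) * Fl m j 0
          = chebQ j * Fl m j 0 - PowerSeries.X * (chebQ (j-1) * Fl m j 0) := by ring
        _ = 1 + PowerSeries.X * (chebQ (m-2-j) * Fh m j (m-1)) := this
        _ = 1 + PowerSeries.X * chebQ (m-2-j) * Fh m j (m-1) := by ring
    have eq3 : (chebQ (j+1) * chebQ (m-1-j) - PowerSeries.X * chebQ j * chebQ (m-2-j)) * Fl m j 0
        = chebQ (m-1-j) := by
      calc (chebQ (j+1) * chebQ (m-1-j) - PowerSeries.X * chebQ j * chebQ (m-2-j)) * Fl m j 0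
          = chebQ (m-1-j) * (chebQ (j+1) * Fl m j 0) - PowerSeries.X * chebQ (m-2-j) * (chebQ j * Fl m j 0) := by
            ring
        _ = chebQ (m-1-j) * (1 + PowerSeries.X * chebQ (m-2-j) * Fh m j (m-1))
            - PowerSeries.X * chebQ (m-2-j) * (chebQ (m-1-j) * Fh m j (m-1)) := by rw [eq2, eq1]
        _ = chebQ (m-1-j) := by ring
    have hmul := chebQ_mul j (m-2-j)
    rw [show (m-2-j)+1 = m-1-j from by omega, show j+(m-2-j)+2 = m from by omega] at hmul
    rw [← hmul, eq3]

lemma heightAt_prefix {N : ℕ} (st : Fin N → Bool) (a : ℕ)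
    (h : ∀ jj : Fin N, (jj:ℕ) < a → st jj = true) :
    ∀ i, i ≤ a → i ≤ N → heightAt st i = i := by
  intro i
  induction i with
  | zero => intro _ _; exact heightAt_zero st
  | succ i ih =>
    intro ha hN
    have hi : i < N := by omega
    rw [heightAt_succ st hi, ih (by omega) (by omega), h ⟨i, hi⟩ (by simpa using by omega)]
    norm_num

lemma heightAt_suffix {N : ℕ} (st : Fin N → Bool) (c : ℕ)
    (h : ∀ jj : Fin N, c ≤ (jj:ℕ) → st jj = false) :
    ∀ t, c + t ≤ N → heightAt st (c + t) = heightAt st c - t := by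
  intro t
  induction t with
  | zero => intro _; simp
  | succ t ih =>
    intro hN
    have hi : c + t < N := by omega
    have : c + (t+1) = (c+t) + 1 := by ring
    rw [this, heightAt_succ st hi, ih (by omega), h ⟨c+t, hi⟩ (by simp)]
    norm_num
    push_cast
    ring

lemma heightAt_mid {L n r : ℕ} (st : Fin L → Bool) (hrn : r + n ≤ L) :
    ∀ k, k ≤ n → heightAt st (r + k) =
      heightAt st r + heightAt (fun k' : Fin n => st ⟨r + k', by omega⟩) k := by
  intro k
  induction k with
  | zero => simp [heightAt_zero]
  | succ k ih =>
    intro hk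
    have hi : r + k < L := by omega
    have hk' : k < n := by omega
    have : r + (k+1) = (r+k) + 1 := by ring
    rw [this, heightAt_succ st hi, ih (by omega),
      heightAt_succ (fun k' : Fin n => st ⟨r + k', by omega⟩) hk']
    ring

def midOf (r s u : ℕ) (st : Fin (2*(r+s+u)) → Bool) : Fin (s+2*u) → Bool :=
  fun k => st ⟨r + (k:ℕ), by have := k.isLt; omega⟩

def fullOf (r s u : ℕ) (mid : Fin (s+2*u) → Bool) : Fin (2*(r+s+u)) → Bool :=
  fun i => if h1 : (i:ℕ) < r then true
    else if h2 : (i:ℕ) < r + (s+2*u) then mid ⟨(i:ℕ) - r, by omega⟩ else false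

lemma midOf_fullOf (r s u : ℕ) (mid : Fin (s+2*u) → Bool) :
    midOf r s u (fullOf r s u mid) = mid := by
  funext k
  have h1 : ¬ (r + (k:ℕ) < r) := by omega
  have h2 : r + (k:ℕ) < r + (s+2*u) := by have := k.isLt; omega
  show (if h1' : r + (k:ℕ) < r then true else if h2' : r + (k:ℕ) < r + (s+2*u)
      then mid ⟨r + (k:ℕ) - r, by omega⟩ else false) = mid k
  rw [dif_neg h1, dif_pos h2]
  congr 1
  exact Fin.ext (by simp)

lemma fullOf_midOf (r s u : ℕ) (st : Fin (2*(r+s+u)) → Bool)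
    (hpre : ∀ jj : Fin (2*(r+s+u)), (jj:ℕ) < r → st jj = true)
    (hsuf : ∀ jj : Fin (2*(r+s+u)), 2*(r+s+u) - (r+s) ≤ (jj:ℕ) → st jj = false) :
    fullOf r s u (midOf r s u st) = st := by
  funext i
  show (if h1 : (i:ℕ) < r then true else if h2 : (i:ℕ) < r + (s+2*u)
      then midOf r s u st ⟨(i:ℕ) - r, by omega⟩ else false) = st i
  by_cases h1 : (i:ℕ) < r
  · rw [dif_pos h1, hpre i h1]
  · rw [dif_neg h1]
    by_cases h2 : (i:ℕ) < r + (s+2*u)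
    · rw [dif_pos h2]
      show st ⟨r + ((i:ℕ) - r), _⟩ = st i
      congr 1
      exact Fin.ext (by simp; omega)
    · rw [dif_neg h2, hsuf i (by have := i.isLt; omega)]

lemma toWalk (m r s u : ℕ) (hm : 2 ≤ m) (hrs : r + s ≤ m - 1)
    (st : Fin (2*(r+s+u)) → Bool)
    (h0 : heightAt st (2*(r+s+u)) = 0)
    (hrange : ∀ i ≤ 2*(r+s+u), 0 ≤ heightAt st i ∧ heightAt st i ≤ (m:ℤ) - 1)
    (hpre : ∀ jj : Fin (2*(r+s+u)), (jj:ℕ) < r → st jj = true)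
    (hsuf : ∀ jj : Fin (2*(r+s+u)), 2*(r+s+u) - (r+s) ≤ (jj:ℕ) → st jj = false) :
    WalkPred m ((r:ℤ)+(s:ℤ)) (r:ℤ) (midOf r s u st) := by
  have hrn : r + (s+2*u) ≤ 2*(r+s+u) := by omega
  have hr : heightAt st r = r := heightAt_prefix st r hpre r le_rfl (by omega)
  have hmid : ∀ k ≤ s+2*u, heightAt st (r+k) = (r:ℤ) + heightAt (midOf r s u st) k := by
    intro k hk
    have := heightAt_mid st hrn k hk
    rw [hr] at this
    exact this
  have hsuf' : ∀ jj : Fin (2*(r+s+u)), r + (s+2*u) ≤ (jj:ℕ) → st jj = false := by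
    intro jj hjj
    exact hsuf jj (by omega)
  have htail := heightAt_suffix st (r+(s+2*u)) hsuf' (r+s) (by omega)
  rw [show r+(s+2*u)+(r+s) = 2*(r+s+u) from by omega, h0] at htail
  have hendmid : (r:ℤ) + heightAt (midOf r s u st) (s+2*u) = (r:ℤ)+(s:ℤ) := by
    have := hmid (s+2*u) le_rfl
    push_cast at htail ⊢
    omega
  constructor
  · intro k hk
    have := hrange (r+k) (by omega)
    rw [hmid k hk] at this
    exact this
  · exact hendmid

lemma toDyck (m r s u : ℕ) (hm : 2 ≤ m) (hrs : r + s ≤ m - 1)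
    (mid : Fin (s+2*u) → Bool)
    (hw : WalkPred m ((r:ℤ)+(s:ℤ)) (r:ℤ) mid) :
    heightAt (fullOf r s u mid) (2*(r+s+u)) = 0 ∧
    (∀ i ≤ 2*(r+s+u), 0 ≤ heightAt (fullOf r s u mid) i ∧
      heightAt (fullOf r s u mid) i ≤ (m:ℤ) - 1) ∧
    (∀ jj : Fin (2*(r+s+u)), (jj:ℕ) < r → fullOf r s u mid jj = true) ∧
    (∀ jj : Fin (2*(r+s+u)), 2*(r+s+u) - (r+s) ≤ (jj:ℕ) → fullOf r s u mid jj = false) := by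
  obtain ⟨hwr, hwe⟩ := hw
  have hrn : r + (s+2*u) ≤ 2*(r+s+u) := by omega
  have hpre : ∀ jj : Fin (2*(r+s+u)), (jj:ℕ) < r → fullOf r s u mid jj = true := by
    intro jj hj
    show (if h1 : (jj:ℕ) < r then true else if h2 : (jj:ℕ) < r + (s+2*u)
      then mid ⟨(jj:ℕ) - r, by omega⟩ else false) = true
    rw [dif_pos hj]
  have hsuf : ∀ jj : Fin (2*(r+s+u)), 2*(r+s+u) - (r+s) ≤ (jj:ℕ) →
      fullOf r s u mid jj = false := by
    intro jj hj
    show (if h1 : (jj:ℕ) < r then true else if h2 : (jj:ℕ) < r + (s+2*u)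
      then mid ⟨(jj:ℕ) - r, by omega⟩ else false) = false
    rw [dif_neg (show ¬ ((jj:ℕ) < r) by omega), dif_neg (by omega)]
  have hr : heightAt (fullOf r s u mid) r = r :=
    heightAt_prefix _ r hpre r le_rfl (by omega)
  have hmid : ∀ k ≤ s+2*u,
      heightAt (fullOf r s u mid) (r+k) = (r:ℤ) + heightAt mid k := by
    intro k hk
    have := heightAt_mid (fullOf r s u mid) hrn k hk
    rw [hr] at this
    have hfm : (fun k' : Fin (s+2*u) => fullOf r s u mid ⟨r + (k':ℕ), by have := k'.isLt; omega⟩)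
        = mid := midOf_fullOf r s u mid
    rw [hfm] at this
    exact this
  have hsuf' : ∀ jj : Fin (2*(r+s+u)), r + (s+2*u) ≤ (jj:ℕ) → fullOf r s u mid jj = false := by
    intro jj hjj
    exact hsuf jj (by omega)
  have hend : heightAt (fullOf r s u mid) (r+(s+2*u)) = (r:ℤ)+(s:ℤ) := by
    rw [hmid (s+2*u) le_rfl, hwe]
  have htail : ∀ t ≤ r+s,
      heightAt (fullOf r s u mid) (r+(s+2*u)+t) = (r:ℤ)+(s:ℤ) - t := by
    intro t ht
    rw [heightAt_suffix _ (r+(s+2*u)) hsuf' t (by omega), hend]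
  refine ⟨?_, ?_, hpre, hsuf⟩
  · have := htail (r+s) le_rfl
    rw [show r+(s+2*u)+(r+s) = 2*(r+s+u) from by omega] at this
    rw [this]
    push_cast
    ring
  · intro i hi
    by_cases h1 : i ≤ r
    · rw [heightAt_prefix _ r hpre i h1 (by omega)]
      have : (r:ℤ)+(s:ℤ) ≤ (m:ℤ) - 1 := by
        have : ((r+s : ℕ) : ℤ) ≤ ((m-1 : ℕ) : ℤ) := by exact_mod_cast hrs
        push_cast at this
        omega
      constructor
      · positivity
      · have : (i:ℤ) ≤ (r:ℤ) := by exact_mod_cast h1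
        omega
    · by_cases h2 : i ≤ r + (s+2*u)
      · have hieq : i = r + (i - r) := by omega
        rw [hieq, hmid (i-r) (by omega)]
        exact hwr (i-r) (by omega)
      · have hieq : i = r + (s+2*u) + (i - (r+(s+2*u))) := by omega
        rw [hieq, htail (i - (r+(s+2*u))) (by omega)]
        have hc : ((i - (r+(s+2*u)) : ℕ) : ℤ) ≤ (r:ℤ)+(s:ℤ) := by
          have : i - (r+(s+2*u)) ≤ r + s := by omega
          exact_mod_cast le_trans (Nat.cast_le.mpr this) (by push_cast; omega)
        have : (r:ℤ)+(s:ℤ) ≤ (m:ℤ) - 1 := by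
          have : ((r+s : ℕ) : ℤ) ≤ ((m-1 : ℕ) : ℤ) := by exact_mod_cast hrs
          push_cast at this
          omega
        constructor
        · omega
        · have h0' : (0:ℤ) ≤ ((i - (r+(s+2*u)) : ℕ) : ℤ) := by positivity
          omega

lemma dyck_wc_card (m r s u : ℕ) (hm : 2 ≤ m) (hrs : r + s ≤ m - 1) :
    Nat.card {st : Fin (2*(r+s+u)) → Bool //
      heightAt st (2*(r+s+u)) = 0 ∧
      (∀ i ≤ 2*(r+s+u), 0 ≤ heightAt st i ∧ heightAt st i ≤ (m:ℤ) - 1) ∧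
      (∀ jj : Fin (2*(r+s+u)), (jj:ℕ) < r → st jj = true) ∧
      (∀ jj : Fin (2*(r+s+u)), 2*(r+s+u) - (r+s) ≤ (jj:ℕ) → st jj = false)}
    = wc m ((r:ℤ)+(s:ℤ)) (s+2*u) (r:ℤ) := by
  rw [wc]
  exact Nat.card_congr
    { toFun := fun x =>
        ⟨midOf r s u x.1, toWalk m r s u hm hrs x.1 x.2.1 x.2.2.1 x.2.2.2.1 x.2.2.2.2⟩
      invFun := fun y => ⟨fullOf r s u y.1, toDyck m r s u hm hrs y.1 y.2⟩
      left_inv := fun x => Subtype.ext (fullOf_midOf r s u x.1 x.2.2.2.1 x.2.2.2.2)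
      right_inv := fun y => Subtype.ext (midOf_fullOf r s u y.1) }


/-- fix `m ≥ 2`, `1 ≤ r ≤ m-1`, `s ≥ 0` with `r + s ≤ m-1`.
For every `u ≥ 0`, the coefficient of `x^u` in
`p_r(x)·p_{m-r-s-1}(x)·p_m(x)^{-1} ∈ ℚ[[x]]` equals `D_m(r, m-r-s-1; u)`,
the number of Dyck paths of height at most `m-1` and semilength `r+s+u` whose
first `r` steps are up-steps and whose last `r+s` steps are down-steps. -/
theorem statement7 (m r s : ℕ) (hm : 2 ≤ m) (hr1 : 1 ≤ r) (hr2 : r ≤ m - 1)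
    (hrs : r + s ≤ m - 1) (u : ℕ) :
    PowerSeries.coeff (R := ℚ) u
      ((chebP r : PowerSeries ℚ) * (chebP (m - r - s - 1) : PowerSeries ℚ) *
        ((chebP m : PowerSeries ℚ))⁻¹)
    = (dyckCount m r (m - r - s - 1) u : ℚ) := by
  have hb : m - r - s - 1 = m - 1 - (r+s) := by omega
  have hkey := keyIdentity m (r+s) hm (by omega) hrs
  have hFr : Fl m (r+s) r = chebQ r * Fl m (r+s) 0 := claimA m (r+s) hm hrs r (by omega)
  have hser : chebQ r * chebQ (m - r - s - 1) * (chebQ m)⁻¹ = Fl m (r+s) r := by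
    rw [hb]
    calc chebQ r * chebQ (m-1-(r+s)) * (chebQ m)⁻¹
        = chebQ r * (chebQ m * Fl m (r+s) 0) * (chebQ m)⁻¹ := by rw [hkey]
      _ = chebQ r * Fl m (r+s) 0 * (chebQ m * (chebQ m)⁻¹) := by ring
      _ = chebQ r * Fl m (r+s) 0 := by
          rw [PowerSeries.mul_inv_cancel _ (chebQ_ne_zero_const m), mul_one]
      _ = Fl m (r+s) r := hFr.symm
  have hcoeff : PowerSeries.coeff (R := ℚ) u (Fl m (r+s) r)
      = ((wc m ((r:ℤ)+(s:ℤ)) (s+2*u) (r:ℤ) : ℕ) : ℚ) := by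
    rw [Fl, PowerSeries.coeff_mk]
    exact wc_cast_congr (by push_cast; ring) (by omega) rfl
  have hdyck : dyckCount m r (m - r - s - 1) u = wc m ((r:ℤ)+(s:ℤ)) (s+2*u) (r:ℤ) := by
    have h1 : m - 1 - (m - r - s - 1) = r + s := by omega
    rw [dyckCount]
    rw [h1]
    exact dyck_wc_card m r s u hm hrs
  show PowerSeries.coeff (R := ℚ) u (chebQ r * chebQ (m - r - s - 1) * (chebQ m)⁻¹) = _
  rw [hser, hcoeff, hdyck]
end

section
/- Let m ≥ 1 and let a, b be integers with 0 ≤ a ≤ b ≤ m−1. Then in ℚ[[x]] one has p_a(x)·p_{m−1−b}(x) = p_m(x)·(Σ_{r≥0} w_{b−a+2r}^{(m)}(a,b)·x^r); equivalently, the coefficient of x^r in p_a(x)·p_{m−1−b}(x)·p_m(x)^{−1} equals w_{b−a+2r}^{(m)}(a,b) for every r ≥ 0. In particular, taking a = 0 and b = m−1, the coefficient of x^u in p_m(x)^{−1} equals B_m(u) for every u ≥ 0. -/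
/-- `stripWalkCount m L a b` is the number of strip walks of height `m-1` from
`a` to `b` of length `L`: sequences `(h₀,…,h_L)` of integers with `h₀ = a`,
`h_L = b`, `h_{i+1} - h_i ∈ {±1}`, and `0 ≤ h_i ≤ m-1` for all `i`.
Heights in `{0,…,m-1}` are encoded as elements of `Fin m`. -/
noncomputable def stripWalkCount (m L a b : ℕ) : ℕ :=
  Nat.card {h : Fin (L + 1) → Fin m //
    (h 0 : ℕ) = a ∧ (h (Fin.last L) : ℕ) = b ∧
    ∀ i : Fin L, ((h i.succ : ℤ) = (h i.castSucc : ℤ) + 1 ∨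
                  (h i.succ : ℤ) = (h i.castSucc : ℤ) - 1)}

/-- `B m u` is the number of full-height strip walks of height `m-1`
from `0` to `m-1` with excess `u`, i.e. of length `m-1+2u`. -/
noncomputable def fullB (m u : ℕ) : ℕ := stripWalkCount m (m - 1 + 2 * u) 0 (m - 1)

def WalkP (m : ℕ) {L : ℕ} (a b : ℕ) (h : Fin (L + 1) → Fin m) : Prop :=
  (h 0 : ℕ) = a ∧ (h (Fin.last L) : ℕ) = b ∧
    ∀ i : Fin L, ((h i.succ : ℤ) = (h i.castSucc : ℤ) + 1 ∨
                  (h i.succ : ℤ) = (h i.castSucc : ℤ) - 1)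

lemma stripWalkCount_def (m L a b : ℕ) :
    stripWalkCount m L a b = Nat.card {h : Fin (L + 1) → Fin m // WalkP m a b h} := rfl

/-- empty if target out of range -/
lemma swc_zero_of_le (m L a b : ℕ) (hb : m ≤ b) : stripWalkCount m L a b = 0 := by
  rw [stripWalkCount_def]
  have : IsEmpty {h : Fin (L + 1) → Fin m // WalkP m a b h} := by
    refine ⟨fun x => ?_⟩
    have h1 := x.2.2.1
    have h2 := (x.1 (Fin.last L)).isLt
    omega
  exact Nat.card_of_isEmpty

/-- length-zero count -/
lemma swc_len_zero (m a b : ℕ) : stripWalkCount m 0 a b = if a = b ∧ a < m then 1 else 0 := by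
  rw [stripWalkCount_def]
  split_ifs with hc
  · obtain ⟨rfl, ham⟩ := hc
    have hne : Nonempty {h : Fin 1 → Fin m // WalkP m a a h} :=
      ⟨⟨fun _ => ⟨a, ham⟩, rfl, rfl, fun i => i.elim0⟩⟩
    have hsub : Subsingleton {h : Fin 1 → Fin m // WalkP m a a h} := by
      refine ⟨fun x y => Subtype.ext (funext fun i => ?_)⟩
      have : i = 0 := Fin.ext (by omega)
      subst this
      exact Fin.ext (by rw [x.2.1, y.2.1])
    exact Nat.card_unique
  · have : IsEmpty {h : Fin 1 → Fin m // WalkP m a b h} := by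
      refine ⟨fun x => hc ?_⟩
      have h0 := x.2.1
      have h1 := x.2.2.1
      have h2 := (x.1 0).isLt
      have : Fin.last 0 = (0 : Fin 1) := Fin.ext (by simp)
      rw [this] at h1
      exact ⟨by omega, by omega⟩
    exact Nat.card_of_isEmpty
lemma walkP_snoc_iff {m L a b : ℕ} (g : Fin (L + 1) → Fin m) (x : Fin m) :
    WalkP m a b (Fin.snoc g x : Fin (L + 1 + 1) → Fin m) ↔
      ((x : ℤ) = (g (Fin.last L) : ℤ) + 1 ∨ (x : ℤ) = (g (Fin.last L) : ℤ) - 1) ∧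
        (x : ℕ) = b ∧ WalkP m a ((g (Fin.last L) : ℕ)) g := by
  have h0 : (Fin.snoc g x : Fin (L + 1 + 1) → Fin m) 0 = g 0 := by
    rw [show (0 : Fin (L + 1 + 1)) = Fin.castSucc 0 from (Fin.castSucc_zero).symm,
      Fin.snoc_castSucc]
  have hlast : (Fin.snoc g x : Fin (L + 1 + 1) → Fin m) (Fin.last (L + 1)) = x :=
    Fin.snoc_last _ _
  constructor
  · rintro ⟨H0, Hl, Hs⟩
    have hstep : ∀ i : Fin L, ((g i.succ : ℤ) = (g i.castSucc : ℤ) + 1 ∨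
        (g i.succ : ℤ) = (g i.castSucc : ℤ) - 1) := by
      intro i
      have := Hs i.castSucc
      rwa [Fin.succ_castSucc, Fin.snoc_castSucc, Fin.snoc_castSucc] at this
    have hend := Hs (Fin.last L)
    rw [Fin.succ_last, hlast, Fin.snoc_castSucc] at hend
    rw [hlast] at Hl
    rw [h0] at H0
    exact ⟨hend, Hl, H0, rfl, hstep⟩
  · rintro ⟨hend, hx, H0, -, Hs⟩
    refine ⟨by rw [h0]; exact H0, by rw [hlast]; exact hx, ?_⟩
    intro i
    induction i using Fin.lastCases with
    | last => rw [Fin.succ_last, hlast, Fin.snoc_castSucc]; exact hend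
    | cast j =>
      rw [Fin.succ_castSucc, Fin.snoc_castSucc, Fin.snoc_castSucc]
      exact Hs j

lemma WalkP.init {m L a b : ℕ} {h : Fin (L + 1 + 1) → Fin m} (H : WalkP m a b h) :
    ((h (Fin.last (L + 1)) : ℤ) = (h (Fin.castSucc (Fin.last L)) : ℤ) + 1 ∨
      (h (Fin.last (L + 1)) : ℤ) = (h (Fin.castSucc (Fin.last L)) : ℤ) - 1) ∧
      (h (Fin.last (L + 1)) : ℕ) = b ∧
      WalkP m a ((h (Fin.castSucc (Fin.last L)) : ℕ)) (Fin.init h) := by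
  have := (walkP_snoc_iff (Fin.init h) (h (Fin.last (L + 1)))).mp
    (by rw [Fin.snoc_init_self]; exact H)
  rwa [show Fin.init h (Fin.last L) = h (Fin.castSucc (Fin.last L)) from rfl] at this
/-- drop-last-step equivalence, target `b ≥ 1`. -/
noncomputable def snocEquiv (m L a b : ℕ) (hb1 : 1 ≤ b) (hbm : b < m) :
    {h : Fin (L + 1 + 1) → Fin m // WalkP m a b h} ≃
      {g : Fin (L + 1) → Fin m // WalkP m a (b - 1) g} ⊕
      {g : Fin (L + 1) → Fin m // WalkP m a (b + 1) g} where
  toFun h :=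
    if hc : (h.1 (Fin.castSucc (Fin.last L)) : ℕ) + 1 = b then
      Sum.inl ⟨Fin.init h.1, by
        have H := h.2.init
        have : (h.1 (Fin.castSucc (Fin.last L)) : ℕ) = b - 1 := by omega
        rw [this] at H
        exact H.2.2⟩
    else
      Sum.inr ⟨Fin.init h.1, by
        have H := h.2.init
        have : (h.1 (Fin.castSucc (Fin.last L)) : ℕ) = b + 1 := by
          rcases H.1 with h1 | h1 <;> · have := H.2.1; omega
        rw [this] at H
        exact H.2.2⟩
  invFun g :=
    Sum.elim
      (fun g => ⟨Fin.snoc g.1 ⟨b, hbm⟩, by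
        refine (walkP_snoc_iff g.1 ⟨b, hbm⟩).mpr ⟨?_, rfl, ?_⟩
        · left
          have := g.2.2.1
          simp only [Fin.val_mk]
          omega
        · exact ⟨g.2.1, rfl, g.2.2.2⟩⟩)
      (fun g => ⟨Fin.snoc g.1 ⟨b, hbm⟩, by
        refine (walkP_snoc_iff g.1 ⟨b, hbm⟩).mpr ⟨?_, rfl, ?_⟩
        · right
          have := g.2.2.1
          simp only [Fin.val_mk]
          omega
        · exact ⟨g.2.1, rfl, g.2.2.2⟩⟩)
      g
  left_inv h := by
    have hl : h.1 (Fin.last (L + 1)) = ⟨b, hbm⟩ := Fin.ext h.2.2.1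
    dsimp only
    by_cases hc : (h.1 (Fin.castSucc (Fin.last L)) : ℕ) + 1 = b
    · rw [dif_pos hc]
      exact Subtype.ext (by dsimp only [Sum.elim_inl]; rw [← hl, Fin.snoc_init_self])
    · rw [dif_neg hc]
      exact Subtype.ext (by dsimp only [Sum.elim_inr]; rw [← hl, Fin.snoc_init_self])
  right_inv g := by
    rcases g with g | g
    · have hv : ((Fin.snoc g.1 ⟨b, hbm⟩ : Fin (L + 1 + 1) → Fin m)
          (Fin.castSucc (Fin.last L)) : ℕ) = b - 1 := by
        rw [Fin.snoc_castSucc]; exact g.2.2.1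
      dsimp only [Sum.elim_inl]
      rw [dif_pos (by omega)]
      exact congrArg Sum.inl (Subtype.ext (by dsimp only; exact Fin.init_snoc _ _))
    · have hv : ((Fin.snoc g.1 ⟨b, hbm⟩ : Fin (L + 1 + 1) → Fin m)
          (Fin.castSucc (Fin.last L)) : ℕ) = b + 1 := by
        rw [Fin.snoc_castSucc]; exact g.2.2.1
      dsimp only [Sum.elim_inr]
      rw [dif_neg (by omega)]
      exact congrArg Sum.inr (Subtype.ext (by dsimp only; exact Fin.init_snoc _ _))

lemma swc_succ (m L a b : ℕ) (hb1 : 1 ≤ b) (hbm : b < m) :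
    stripWalkCount m (L + 1) a b =
      stripWalkCount m L a (b - 1) + stripWalkCount m L a (b + 1) := by
  rw [stripWalkCount_def, stripWalkCount_def, stripWalkCount_def,
    Nat.card_congr (snocEquiv m L a b hb1 hbm), Nat.card_sum]

/-- drop-last-step, target `0`. -/
noncomputable def snocEquivZero (m L a : ℕ) (hm : 0 < m) :
    {h : Fin (L + 1 + 1) → Fin m // WalkP m a 0 h} ≃
      {g : Fin (L + 1) → Fin m // WalkP m a 1 g} where
  toFun h := ⟨Fin.init h.1, by
    have H := h.2.init
    have : (h.1 (Fin.castSucc (Fin.last L)) : ℕ) = 1 := by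
      rcases H.1 with h1 | h1 <;> · have := H.2.1; omega
    rw [this] at H
    exact H.2.2⟩
  invFun g := ⟨Fin.snoc g.1 ⟨0, hm⟩, by
    refine (walkP_snoc_iff g.1 ⟨0, hm⟩).mpr ⟨?_, rfl, ?_⟩
    · right
      have := g.2.2.1
      simp only [Fin.val_mk]
      omega
    · exact ⟨g.2.1, rfl, g.2.2.2⟩⟩
  left_inv h := by
    have hl : h.1 (Fin.last (L + 1)) = ⟨0, hm⟩ := Fin.ext h.2.2.1
    exact Subtype.ext (by dsimp only; rw [← hl, Fin.snoc_init_self])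
  right_inv g := Subtype.ext (by dsimp only; rw [Fin.init_snoc])

lemma swc_succ_zero (m L a : ℕ) (hm : 0 < m) :
    stripWalkCount m (L + 1) a 0 = stripWalkCount m L a 1 := by
  rw [stripWalkCount_def, stripWalkCount_def, Nat.card_congr (snocEquivZero m L a hm)]
lemma WalkP.rev {m L a b : ℕ} {h : Fin (L + 1) → Fin m} (H : WalkP m a b h) :
    WalkP m b a (fun i => h i.rev) := by
  obtain ⟨H0, Hl, Hs⟩ := H
  refine ⟨?_, ?_, ?_⟩
  · show (h (Fin.rev 0) : ℕ) = b
    rw [Fin.rev_zero]; exact Hl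
  · show (h (Fin.rev (Fin.last L)) : ℕ) = a
    rw [Fin.rev_last]; exact H0
  · intro i
    have := Hs i.rev
    show ((h (Fin.rev i.succ) : ℤ) = (h (Fin.rev i.castSucc) : ℤ) + 1 ∨
      (h (Fin.rev i.succ) : ℤ) = (h (Fin.rev i.castSucc) : ℤ) - 1)
    rw [Fin.rev_succ, Fin.rev_castSucc]
    omega

lemma swc_symm (m L a b : ℕ) : stripWalkCount m L a b = stripWalkCount m L b a := by
  rw [stripWalkCount_def, stripWalkCount_def]
  refine Nat.card_congr ⟨fun h => ⟨fun i => h.1 i.rev, h.2.rev⟩,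
    fun h => ⟨fun i => h.1 i.rev, h.2.rev⟩, fun h => ?_, fun h => ?_⟩ <;>
  · exact Subtype.ext (funext fun i => by dsimp only; rw [Fin.rev_rev])

lemma swc_zero_of_lt (m L a b : ℕ) (h : a + L < b) : stripWalkCount m L a b = 0 := by
  induction L generalizing b with
  | zero => rw [swc_len_zero]; simp only [ite_eq_right_iff]; rintro ⟨rfl, -⟩; omega
  | succ L ih =>
    rcases lt_or_ge b m with hbm | hbm
    · rw [swc_succ m L a b (by omega) hbm, ih (b - 1) (by omega), ih (b + 1) (by omega)]
    · exact swc_zero_of_le m _ a b hbm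
noncomputable def Wser (m a b : ℕ) : PowerSeries ℚ :=
  PowerSeries.mk fun r => (stripWalkCount m (b - a + 2 * r) a b : ℚ)

lemma Wser_zero_of_le (m a b : ℕ) (hb : m ≤ b) : Wser m a b = 0 := by
  ext r
  simp [Wser, swc_zero_of_le m _ a b hb]

lemma chebP_coe (k : ℕ) :
    ((chebP (k + 2) : Polynomial ℚ) : PowerSeries ℚ) =
      (chebP (k + 1) : PowerSeries ℚ) - PowerSeries.X * (chebP k : PowerSeries ℚ) := by
  rw [show chebP (k + 2) = chebP (k + 1) - Polynomial.X * chebP k from rfl,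
    Polynomial.coe_sub, Polynomial.coe_mul, Polynomial.coe_X]

lemma chebP_coeff_zero : ∀ k, (chebP k).coeff 0 = 1 := by
  intro k
  induction k using Nat.strong_induction_on with
  | _ k ih =>
    match k with
    | 0 => simp [chebP]
    | 1 => simp [chebP]
    | (k + 2) =>
      rw [show chebP (k + 2) = chebP (k + 1) - Polynomial.X * chebP k from rfl]
      simp [Polynomial.mul_coeff_zero, ih (k + 1) (by omega)]

/-- three-term recurrence in the target -/
lemma Wser_rec (m a b : ℕ) (hab : a < b) (hbm : b < m) :
    Wser m a b = Wser m a (b - 1) + PowerSeries.X * Wser m a (b + 1) := by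
  ext r
  simp only [Wser, PowerSeries.coeff_mk, map_add]
  rw [show b - a + 2 * r = ((b - 1) - a + 2 * r) + 1 from by omega,
    swc_succ m _ a b (by omega) hbm]
  push_cast
  congr 1
  match r with
  | 0 =>
    rw [swc_zero_of_lt m _ a (b + 1) (by omega)]
    simp
  | (r + 1) =>
    rw [PowerSeries.coeff_succ_X_mul, PowerSeries.coeff_mk]
    congr 2
    omega
lemma Wser_chain (m : ℕ) : ∀ k a, a + k + 1 ≤ m →
    Wser m a (m - 1 - k) = (chebP k : PowerSeries ℚ) * Wser m a (m - 1) := by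
  intro k
  induction k using Nat.strong_induction_on with
  | _ k ih =>
    match k with
    | 0 =>
      intro a ha
      simp [show chebP 0 = 1 from rfl]
    | 1 =>
      intro a ha
      have h1 := Wser_rec m a (m - 1) (by omega) (by omega)
      rw [show m - 1 + 1 = m from by omega, Wser_zero_of_le m a m le_rfl, mul_zero,
        add_zero] at h1
      rw [show chebP 1 = 1 from rfl, Polynomial.coe_one, one_mul]
      exact h1.symm
    | (k + 2) =>
      intro a ha
      have h1 := Wser_rec m a (m - 1 - (k + 1)) (by omega) (by omega)
      rw [show m - 1 - (k + 1) - 1 = m - 1 - (k + 2) from by omega,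
        show m - 1 - (k + 1) + 1 = m - 1 - k from by omega] at h1
      have h2 := ih (k + 1) (by omega) a (by omega)
      have h3 := ih k (by omega) a (by omega)
      have hc := chebP_coe k
      linear_combination -h1 + h2 - PowerSeries.X * h3 - Wser m a (m - 1) * hc

lemma Vser_step0 (m : ℕ) (hm : 2 ≤ m) : Wser m 0 (m - 1) = Wser m 1 (m - 1) := by
  ext r
  simp only [Wser, PowerSeries.coeff_mk]
  rw [swc_symm m _ 0 (m - 1), swc_symm m _ 1 (m - 1),
    show m - 1 - 0 + 2 * r = (m - 1 - 1 + 2 * r) + 1 from by omega,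
    swc_succ_zero m _ (m - 1) (by omega)]

lemma Vser_rec (m a : ℕ) (ha1 : 1 ≤ a) (ham : a + 1 < m) :
    Wser m a (m - 1) =
      PowerSeries.X * Wser m (a - 1) (m - 1) + Wser m (a + 1) (m - 1) := by
  ext r
  simp only [Wser, PowerSeries.coeff_mk, map_add]
  rw [swc_symm m _ a (m - 1),
    show m - 1 - a + 2 * r = ((m - 2 - a) + 2 * r) + 1 from by omega,
    swc_succ m _ (m - 1) a (by omega) (by omega)]
  push_cast
  congr 1
  · match r with
    | 0 =>
      rw [swc_symm m _ (m - 1) (a - 1), swc_zero_of_lt m _ (a - 1) (m - 1) (by omega)]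
      simp
    | (r + 1) =>
      rw [PowerSeries.coeff_succ_X_mul, PowerSeries.coeff_mk,
        swc_symm m _ (m - 1) (a - 1),
        show m - 2 - a + 2 * (r + 1) = m - 1 - (a - 1) + 2 * r from by omega]
  · rw [swc_symm m _ (m - 1) (a + 1),
      show m - 2 - a + 2 * r = m - 1 - (a + 1) + 2 * r from by omega]

lemma Vser_chain (m : ℕ) : ∀ a, a < m →
    Wser m a (m - 1) = (chebP a : PowerSeries ℚ) * Wser m 0 (m - 1) := by
  intro a
  induction a using Nat.strong_induction_on with
  | _ a ih =>
    match a with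
    | 0 =>
      intro _
      simp [show chebP 0 = 1 from rfl]
    | 1 =>
      intro h1m
      rw [show chebP 1 = 1 from rfl, Polynomial.coe_one, one_mul]
      exact (Vser_step0 m (by omega)).symm
    | (a + 2) =>
      intro ham
      have h1 := Vser_rec m (a + 1) (by omega) (by omega)
      rw [show a + 1 - 1 = a from rfl] at h1
      have h2 := ih (a + 1) (by omega) (by omega)
      have h3 := ih a (by omega) (by omega)
      have hc := chebP_coe a
      linear_combination -h1 + h2 - PowerSeries.X * h3 - Wser m 0 (m - 1) * hc

lemma Wser00 (m : ℕ) (hm : 1 ≤ m) : Wser m 0 0 = 1 + PowerSeries.X * Wser m 0 1 := by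
  ext r
  simp only [Wser, PowerSeries.coeff_mk, map_add]
  match r with
  | 0 =>
    rw [show (0 : ℕ) - 0 + 2 * 0 = 0 from rfl, swc_len_zero]
    simp
    omega
  | (r + 1) =>
    rw [show (0 : ℕ) - 0 + 2 * (r + 1) = (2 * r + 1) + 1 from by omega,
      swc_succ_zero m _ 0 (by omega), PowerSeries.coeff_succ_X_mul, PowerSeries.coeff_mk,
      show (1 : ℕ) - 0 + 2 * r = 2 * r + 1 from by omega]
    simp [PowerSeries.coeff_one]

lemma inv_key (m : ℕ) (hm : 1 ≤ m) : (chebP m : PowerSeries ℚ) * Wser m 0 (m - 1) = 1 := by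
  rcases eq_or_lt_of_le hm with h1 | h2
  · obtain rfl : m = 1 := h1.symm
    have h := Wser00 1 le_rfl
    rw [Wser_zero_of_le 1 0 1 le_rfl, mul_zero, add_zero] at h
    rw [show (1 : ℕ) - 1 = 0 from rfl, h, show chebP 1 = 1 from rfl]
    simp
  · obtain ⟨k, rfl⟩ : ∃ k, m = k + 2 := ⟨m - 2, by omega⟩
    have h00 := Wser_chain (k + 2) (k + 1) 0 (by omega)
    have h01 := Wser_chain (k + 2) k 0 (by omega)
    rw [show k + 2 - 1 - (k + 1) = 0 from by omega] at h00
    rw [show k + 2 - 1 - k = 1 from by omega] at h01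
    have hw := Wser00 (k + 2) (by omega)
    have hc := chebP_coe k
    rw [show k + 2 - 1 = k + 1 from by omega] at h00 h01 ⊢
    linear_combination hw - h00 + PowerSeries.X * h01 + Wser (k + 2) 0 (k + 1) * hc
/-- let `m ≥ 1` and `0 ≤ a ≤ b ≤ m-1`.  Then in `ℚ[[x]]`,
`p_a(x)·p_{m-1-b}(x) = p_m(x)·(Σ_r w^{(m)}_{b-a+2r}(a,b)·x^r)`; equivalently,
the coefficient of `x^r` in `p_a(x)·p_{m-1-b}(x)·p_m(x)^{-1}` equals
`w^{(m)}_{b-a+2r}(a,b)` for every `r ≥ 0`.  In particular (taking `a = 0`,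
`b = m-1`), the coefficient of `x^u` in `p_m(x)^{-1}` equals `B_m(u)`. -/
theorem statement13 (m a b : ℕ) (hm : 1 ≤ m) (hab : a ≤ b) (hb : b ≤ m - 1) :
    ((chebP a : PowerSeries ℚ) * (chebP (m - 1 - b) : PowerSeries ℚ)
        = (chebP m : PowerSeries ℚ) *
            PowerSeries.mk (fun r => (stripWalkCount m (b - a + 2 * r) a b : ℚ))) ∧
    (∀ r : ℕ,
      PowerSeries.coeff (R := ℚ) r
        ((chebP a : PowerSeries ℚ) * (chebP (m - 1 - b) : PowerSeries ℚ) *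
          ((chebP m : PowerSeries ℚ))⁻¹)
      = (stripWalkCount m (b - a + 2 * r) a b : ℚ)) ∧
    (∀ u : ℕ,
      PowerSeries.coeff (R := ℚ) u ((chebP m : PowerSeries ℚ))⁻¹ = (fullB m u : ℚ)) := by
  have hne : PowerSeries.constantCoeff (R := ℚ) (chebP m : PowerSeries ℚ) ≠ 0 := by
    rw [← PowerSeries.coeff_zero_eq_constantCoeff, Polynomial.coeff_coe, chebP_coeff_zero]
    exact one_ne_zero
  have hinv := inv_key m hm
  have hchain := Wser_chain m (m - 1 - b) a (by omega)
  rw [show m - 1 - (m - 1 - b) = b from by omega] at hchain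
  have hv := Vser_chain m a (by omega)
  have key : (chebP a : PowerSeries ℚ) * (chebP (m - 1 - b) : PowerSeries ℚ)
      = (chebP m : PowerSeries ℚ) * Wser m a b := by
    linear_combination -(chebP m : PowerSeries ℚ) * hchain
      - (chebP m : PowerSeries ℚ) * (chebP (m - 1 - b) : PowerSeries ℚ) * hv
      - (chebP a : PowerSeries ℚ) * (chebP (m - 1 - b) : PowerSeries ℚ) * hinv
  have hmul : (chebP m : PowerSeries ℚ) * ((chebP m : PowerSeries ℚ))⁻¹ = 1 :=
    PowerSeries.mul_inv_cancel _ hne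
  have key2 : (chebP a : PowerSeries ℚ) * (chebP (m - 1 - b) : PowerSeries ℚ) *
      ((chebP m : PowerSeries ℚ))⁻¹ = Wser m a b := by
    linear_combination ((chebP m : PowerSeries ℚ))⁻¹ * key + Wser m a b * hmul
  have key3 : ((chebP m : PowerSeries ℚ))⁻¹ = Wser m 0 (m - 1) :=
    ((PowerSeries.eq_inv_iff_mul_eq_one hne).mpr (by linear_combination hinv)).symm
  refine ⟨key, fun r => ?_, fun u => ?_⟩
  · rw [key2, Wser, PowerSeries.coeff_mk]
  · rw [key3, Wser, PowerSeries.coeff_mk, show m - 1 - 0 + 2 * u = m - 1 + 2 * u from by omega]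
    rfl
end
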